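/- Let F be a field, and let T be the abelian regular subgroup of Aff(tF[[t]]) associated to the radical ring V = tF[[t]] (i.e. T = { y ↦ y∘x : x ∈ V }). Then T intersects the group of translations trivially, and T is torsion-free. -/

import Mathlib

/-- The maximal ideal `tF[[t]]` of `F[[t]]`, as an `F`-submodule. -/
noncomputable def psM (F : Type*) [Field F] : Submodule F (PowerSeries F) :=
  LinearMap.ker (PowerSeries.coeff (R := F) 0)

/-- The multiplication of `F[[t]]`, restricted to `tF[[t]]`. -/
noncomputable def psMul {F : Type*} [Field F] (x y : psM F) : psM F :=
  ⟨x.val * y.val, by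
    have hx := x.property
    have hy := y.property
    simp only [psM, LinearMap.mem_ker, PowerSeries.coeff_zero_eq_constantCoeff] at hx hy ⊢
    simp [map_mul, hx]⟩

open PowerSeries

lemma key {F : Type*} [Field F] : ∀ n : ℕ, 0 < n → ∀ x : PowerSeries F,
    constantCoeff x = 0 → (1 + x) ^ n = 1 → x = 0 := by
  intro n
  induction n using Nat.strong_induction_on with
  | _ n ih =>
  intro hn x hx hpow
  by_cases hchar : (n : F) = 0
  · -- characteristic p divides n
    set p := ringChar F with hp
    have hcp : CharP F p := ringChar.charP F
    have hpne : p ≠ 0 := by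
      intro h0
      have h1 : CharP F 0 := h0 ▸ hcp
      have h2 : (n : F) = 0 ↔ (0 : ℕ) ∣ n := CharP.cast_eq_zero_iff F 0 n
      have := h2.mp hchar
      omega
    have hprime : p.Prime := ((CharP.char_is_prime_or_zero F p).resolve_right hpne)
    have hdvd : p ∣ n := (CharP.cast_eq_zero_iff F p n).mp hchar
    obtain ⟨m, hm⟩ := hdvd
    have hm0 : 0 < m := by
      rcases Nat.eq_zero_or_pos m with h | h
      · exfalso; rw [h, mul_zero] at hm; omega
      · exact h
    have hmlt : m < n := by
      have := hprime.two_le; nlinarith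
    haveI : Fact p.Prime := ⟨hprime⟩
    haveI : CharP (PowerSeries F) p :=
      charP_of_injective_ringHom (C (R := F)).injective p
    have hfrob : (1 + x) ^ p = 1 + x ^ p := by
      rw [add_pow_char, one_pow]
    have hpow' : (1 + x ^ p) ^ m = 1 := by
      rw [← hfrob, ← pow_mul, ← hm, hpow]
    have hx' : constantCoeff (x ^ p) = 0 := by
      rw [map_pow, hx, zero_pow hpne]
    have := ih m hmlt hm0 (x ^ p) hx' hpow'
    exact pow_eq_zero_iff hpne |>.mp this
  · -- coefficient argument
    by_contra hxne
    have hex : ∃ k, coeff k x ≠ 0 := by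
      by_contra h
      push_neg at h
      exact hxne (PowerSeries.ext fun k => by simp [h k])
    classical
    set k := Nat.find hex with hkdef
    have hk : coeff k x ≠ 0 := Nat.find_spec hex
    have hlt : ∀ i < k, coeff i x = 0 := fun i hi => by
      by_contra h
      have := Nat.find_min' hex h
      omega
    have hk1 : 1 ≤ k := by
      rcases Nat.eq_zero_or_pos k with h | h
      · exfalso; apply hk; rw [h, coeff_zero_eq_constantCoeff]; exact hx
      · exact h
    -- coeff m (x*x) = 0 for m < 2k
    have h2 : ∀ m < 2 * k, coeff m (x * x) = 0 := by
      intro m hm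
      rw [coeff_mul]
      apply Finset.sum_eq_zero
      intro p hp
      rw [Finset.HasAntidiagonal.mem_antidiagonal] at hp
      rcases lt_or_ge p.1 k with h | h
      · rw [hlt _ h, zero_mul]
      · rw [hlt p.2 (by omega), mul_zero]
    -- coeff k (x^i) = 0 for 2 ≤ i
    have hpowc : ∀ i, 2 ≤ i → coeff k (x ^ i) = 0 := by
      intro i hi
      obtain ⟨j, rfl⟩ : ∃ j, i = 2 + j := ⟨i - 2, by omega⟩
      rw [pow_add, pow_two, coeff_mul]
      apply Finset.sum_eq_zero
      intro p hp
      rw [Finset.HasAntidiagonal.mem_antidiagonal] at hp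
      rw [h2 p.1 (by omega), zero_mul]
    -- expand
    have hexp : coeff k ((x + 1) ^ n) = coeff k x * n := by
      rw [add_pow]
      rw [map_sum]
      rw [Finset.sum_eq_single 1]
      · rw [pow_one, one_pow, mul_one]
        have : (↑(n.choose 1) : PowerSeries F) = C (↑(n.choose 1) : F) := by
          rw [map_natCast]
        rw [this, coeff_mul_C, Nat.choose_one_right]
      · intro i hi hne
        rcases Nat.lt_or_ge i 2 with h | h
        · interval_cases i
          · have hkne : k ≠ 0 := by omega
            simp [coeff_one, hkne]
          · omega
        · have : (↑(n.choose i) : PowerSeries F) = C (↑(n.choose i) : F) := by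
            rw [map_natCast]
          rw [one_pow, mul_one, this, coeff_mul_C, hpowc i h, zero_mul]
      · intro h
        exfalso; apply h; rw [Finset.mem_range]; omega
    rw [add_comm (1:PowerSeries F) x] at hpow
    rw [hpow, coeff_one, if_neg (by omega)] at hexp
    exact hchar (by
      have := hexp.symm
      rcases mul_eq_zero.mp this with h | h
      · exact absurd h hk
      · exact h)


lemma aux1 {F : Type*} [Field F] (g : psM F ≃ᵃ[F] psM F) (x : psM F)
    (hgx : ∀ y : psM F, g y = y + x + psMul y x) (hx : x = 0) : g = 1 := by
  apply AffineEquiv.ext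
  intro y
  rw [hgx y, hx]
  have : psMul y (0 : psM F) = 0 := by
    apply Subtype.ext
    simp [psMul]
  rw [this]
  simp

lemma aux2 {F : Type*} [Field F] (g : psM F ≃ᵃ[F] psM F) (x : psM F)
    (hgx : ∀ y : psM F, g y = y + x + psMul y x) :
    ∀ m : ℕ, ∀ y : psM F, 1 + ((g ^ m) y).val = (1 + y.val) * (1 + x.val) ^ m := by
  intro m
  induction m with
  | zero => intro y; simp
  | succ m ih =>
    intro y
    have hmul : (g ^ (m + 1)) y = (g ^ m) (g y) := by
      rw [pow_succ]
      rfl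
    rw [hmul, ih (g y), hgx y]
    have hc : (↑(psMul y x) : PowerSeries F) = ↑y * ↑x := rfl
    push_cast [hc]
    ring

theorem stmt {F : Type*} [Field F]
    (T : Subgroup (psM F ≃ᵃ[F] psM F))
    (hT : ∀ g : psM F ≃ᵃ[F] psM F,
      g ∈ T ↔ ∃ x : psM F, ∀ y : psM F, g y = y + x + psMul y x) :
    (∀ g ∈ T, (∃ c : psM F, ∀ y : psM F, g y = y + c) → g = 1) ∧
    (∀ g ∈ T, ∀ n : ℕ, 0 < n → g ^ n = 1 → g = 1) := by
  constructor
  · rintro g hg ⟨c, hc⟩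
    obtain ⟨x, hgx⟩ := (hT g).mp hg
    have h0 : psMul (0 : psM F) x = 0 := Subtype.ext (by simp [psMul])
    have hxc : x = c := by
      have h1 := hgx 0
      have h2 := hc 0
      rw [h0] at h1
      simp only [zero_add, add_zero] at h1 h2
      rw [h1] at h2
      exact h2
    set tX : psM F := ⟨PowerSeries.X, by simp [psM]⟩ with htX
    have h3 : tX + x + psMul tX x = tX + x := by
      rw [← hgx tX, hc tX, hxc]
    have h4 : psMul tX x = 0 := by
      have := congrArg (fun z => z - (tX + x)) h3
      simpa using this
    have h5 : (PowerSeries.X : PowerSeries F) * x.val = 0 := congrArg Subtype.val h4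
    have h6 : x.val = 0 := by
      rcases mul_eq_zero.mp h5 with h | h
      · exact absurd h PowerSeries.X_ne_zero
      · exact h
    exact aux1 g x hgx (Subtype.ext h6)
  · intro g hg n hn hpow
    obtain ⟨x, hgx⟩ := (hT g).mp hg
    have h1 := aux2 g x hgx n 0
    rw [hpow] at h1
    simp only [ZeroMemClass.coe_zero, add_zero, one_mul] at h1
    have h2 : ((1 : psM F ≃ᵃ[F] psM F) 0 : psM F) = 0 := rfl
    rw [h2] at h1
    simp only [ZeroMemClass.coe_zero, add_zero] at h1
    have hxc : PowerSeries.constantCoeff x.val = 0 := by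
      have h := x.property
      simp only [psM, LinearMap.mem_ker,
        PowerSeries.coeff_zero_eq_constantCoeff] at h
      exact h
    have h7 : x.val = 0 := key n hn x.val hxc h1.symm
    exact aux1 g x hgx (Subtype.ext h7)
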